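/- Let B be a p-adically complete ring. The reduction-mod-p map induces a multiplicative bijection from lim_{x↦x^p} B (sequences (bₙ) in B with b_{n+1}^p = bₙ) onto the tilt B^♭ = lim_{x↦x^p} B/p. -/

import Mathlib

/-- Sequences `(bₙ)` in `B` with `b_{n+1}^p = bₙ`, i.e. the limit `lim_{x ↦ x^p} B`. -/
def PPowSeq (p : ℕ) (B : Type) [CommRing B] : Type :=
  { f : ℕ → B // ∀ n, (f (n + 1)) ^ p = f n }

/-- Pointwise multiplication on `lim_{x ↦ x^p} B`. -/
def PPowSeq.mul {p : ℕ} {B : Type} [CommRing B] (f g : PPowSeq p B) : PPowSeq p B :=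
  ⟨fun n => f.1 n * g.1 n, fun n => by rw [mul_pow, f.2 n, g.2 n]⟩

/-- Componentwise reduction modulo `p`, a map `lim_{x ↦ x^p} B → B^♭ = lim_{x ↦ x^p} B/p`. -/
def tiltReduction (p : ℕ) (B : Type) [CommRing B] (f : PPowSeq p B) :
    PPowSeq p (B ⧸ Ideal.span {(p : B)}) :=
  ⟨fun n => Ideal.Quotient.mk _ (f.1 n), fun n => by
    rw [← map_pow, f.2 n]⟩

namespace Statement9Aux

variable {p : ℕ} {B : Type} [CommRing B]

lemma smod_iff (n : ℕ) (a b : B) :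
    a ≡ b [SMOD ((Ideal.span {(p : B)}) ^ n • ⊤ : Submodule B B)] ↔ (p : B) ^ n ∣ a - b := by
  rw [Ideal.smul_eq_mul, Ideal.mul_top, SModEq.sub_mem, Ideal.span_singleton_pow,
    Ideal.mem_span_singleton]

/-- Hausdorff-ness: two elements congruent mod all powers of `p` are equal. -/
lemma eq_of_forall_dvd [IsHausdorff (Ideal.span {(p : B)}) B] (a b : B)
    (h : ∀ n : ℕ, (p : B) ^ n ∣ a - b) : a = b := by
  have := IsHausdorff.haus (inferInstance : IsHausdorff (Ideal.span {(p : B)}) B) (a - b)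
    (fun n => by rw [SModEq.zero, Ideal.smul_eq_mul, Ideal.mul_top,
      Ideal.span_singleton_pow, Ideal.mem_span_singleton]; exact h n)
  exact sub_eq_zero.mp this

/-- Mod-`p` congruence to the `p^k`-th power improves to mod `p^(k+1)`. -/
lemma pow_cong (a b : B) (h : (p : B) ∣ a - b) (k : ℕ) :
    (p : B) ^ (k + 1) ∣ a ^ p ^ k - b ^ p ^ k := by
  exact_mod_cast dvd_sub_pow_of_dvd_sub h k

end Statement9Aux

open Statement9Aux in
/-- **Fontaine's multiplicative bijection for `p`-complete rings.**
If `B` is `p`-adically complete, reduction mod `p` induces a multiplicative bijection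
from `lim_{x ↦ x^p} B` onto the tilt `B^♭ = lim_{x ↦ x^p} B/p`. -/
theorem statement9 (p : ℕ) [Fact p.Prime] (B : Type) [CommRing B]
    [IsAdicComplete (Ideal.span {(p : B)}) B] :
    Function.Bijective (tiltReduction p B) ∧
      ∀ f g : PPowSeq p B,
        tiltReduction p B (f.mul g) = (tiltReduction p B f).mul (tiltReduction p B g) := by
  have key : ∀ a b : B, Ideal.Quotient.mk (Ideal.span {(p : B)}) a =
      Ideal.Quotient.mk (Ideal.span {(p : B)}) b ↔ (p : B) ∣ a - b := fun a b => by
    rw [Ideal.Quotient.eq, Ideal.mem_span_singleton]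
  refine ⟨⟨?_, ?_⟩, ?_⟩
  · -- injectivity
    rintro ⟨f, hf⟩ ⟨g, hg⟩ hfg
    have h : ∀ n, Ideal.Quotient.mk (Ideal.span {(p : B)}) (f n) =
        Ideal.Quotient.mk (Ideal.span {(p : B)}) (g n) := fun n =>
      congrFun (congrArg Subtype.val hfg) n
    refine Subtype.ext (funext fun n => ?_)
    -- iterated p-th power relation: f n = f (n+k) ^ (p ^ k)
    have hit : ∀ (f : ℕ → B), (∀ m, f (m + 1) ^ p = f m) → ∀ n k, f (n + k) ^ p ^ k = f n := by
      intro f hf n k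
      induction k with
      | zero => simp
      | succ k ih => rw [← Nat.add_assoc, pow_succ', pow_mul, hf (n + k), ih]
    refine eq_of_forall_dvd (p := p) _ _ fun k => ?_
    show (p : B) ^ k ∣ f n - g n
    rcases k with _ | k
    · simp
    · rw [← hit f hf n k, ← hit g hg n k]
      exact pow_cong _ _ ((key _ _).mp (h (n + k))) k
  · -- surjectivity
    rintro ⟨x, hx⟩
    -- choose lifts
    choose g hg using fun n => Ideal.Quotient.mk_surjective (I := Ideal.span {(p : B)}) (x n)
    -- the approximating sequences
    set a : ℕ → ℕ → B := fun n k => g (n + k) ^ p ^ k with ha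
    have hstep : ∀ n k, (p : B) ^ (k + 1) ∣ a n (k + 1) - a n k := by
      intro n k
      have h1 : (p : B) ∣ g (n + (k + 1)) ^ p - g (n + k) := by
        rw [← key, map_pow, hg, hg, ← Nat.add_assoc]
        exact hx (n + k)
      have := pow_cong _ _ h1 k
      rw [← pow_mul, ← pow_succ'] at this
      simpa [ha] using this
    have hcauchy : ∀ n, ∀ {m k : ℕ}, m ≤ k → (p : B) ^ m ∣ a n m - a n k := by
      intro n m k h
      induction k with
      | zero => simp [Nat.le_zero.mp h]
      | succ k ih =>
        rcases Nat.lt_or_ge m (k + 1) with h' | h'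
        · have h1 := ih (Nat.lt_succ_iff.mp h')
          have h2 : (p : B) ^ m ∣ a n (k + 1) - a n k :=
            dvd_trans (pow_dvd_pow _ h) (hstep n k)
          have h3 : a n m - a n (k + 1) = (a n m - a n k) - (a n (k + 1) - a n k) := by ring
          rw [h3]
          exact dvd_sub h1 h2
        · have hm : m = k + 1 := le_antisymm h h'
          subst hm
          simp
    choose L hL using fun n => IsPrecomplete.prec
      (inferInstance : IsPrecomplete (Ideal.span {(p : B)}) B) (f := a n)
      (fun {m k} h => (smod_iff m _ _).mpr (hcauchy n h))
    have hL' : ∀ n k, (p : B) ^ k ∣ a n k - L n := fun n k => (smod_iff k _ _).mp (hL n k)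
    refine ⟨⟨L, fun n => ?_⟩, ?_⟩
    · -- L (n+1) ^ p = L n
      refine eq_of_forall_dvd (p := p) _ _ fun k => ?_
      have h1 : (p : B) ^ k ∣ L (n + 1) ^ p - a (n + 1) k ^ p :=
        dvd_trans ((dvd_sub_comm).mp (hL' (n + 1) k)) (sub_dvd_pow_sub_pow _ _ p)
      have h2 : a (n + 1) k ^ p = a n (k + 1) := by
        simp only [ha]
        rw [← pow_mul, ← pow_succ, Nat.add_assoc, Nat.add_comm 1 k]
      have h3 : (p : B) ^ k ∣ a n (k + 1) - L n :=
        dvd_trans (pow_dvd_pow _ (Nat.le_succ k)) (hL' n (k + 1))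
      calc (p : B) ^ k ∣ (L (n + 1) ^ p - a (n + 1) k ^ p) + (a n (k + 1) - L n) :=
            dvd_add h1 h3
        _ = L (n + 1) ^ p - L n := by rw [h2]; ring
    · -- reduction equals x
      refine Subtype.ext (funext fun n => ?_)
      show Ideal.Quotient.mk _ (L n) = x n
      have h1 : (p : B) ∣ L n - a n 1 := by
        simpa using (dvd_sub_comm).mp (dvd_trans (pow_dvd_pow _ (le_refl 1)) (hL' n 1) : (p:B)^1 ∣ _)
      have h2 : Ideal.Quotient.mk (Ideal.span {(p : B)}) (a n 1) = x n := by
        simp only [ha, pow_one]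
        rw [map_pow, hg]
        exact hx n
      rw [← h2, key]
      exact h1
  · -- multiplicativity
    intro f g
    refine Subtype.ext (funext fun n => ?_)
    simp [tiltReduction, PPowSeq.mul]
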